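/- Let g: {0,1,...,m} → ℝ be defined by g(a) = N(a)/D(a), where N(a) = Σ_{i≤a} Λw_iY_i + Σ_{i>a} Λ^{-1}w_iY_i and D(a) = Σ_{i≤a} Λw_i + Σ_{i>a} Λ^{-1}w_i, with Y₁ ≥ ... ≥ Y_m, w_i > 0, Λ > 1. Then g(a+1) ≥ g(a) if and only if Y_{a+1} ≥ g(a). -/

import Mathlib

open Finset

theorem stmt_19 (m : ℕ) (Y w : Fin m → ℝ)
    (hY : ∀ i j : Fin m, i ≤ j → Y j ≤ Y i) (hw : ∀ i, 0 < w i)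
    (Λ : ℝ) (hΛ : 1 < Λ) (a : ℕ) (ha : a < m) :
    let g : ℕ → ℝ := fun b =>
      (∑ i : Fin m, (if (i : ℕ) < b then Λ else Λ⁻¹) * w i * Y i) /
        (∑ i : Fin m, (if (i : ℕ) < b then Λ else Λ⁻¹) * w i)
    (g a ≤ g (a + 1) ↔ g a ≤ Y ⟨a, ha⟩) := by
  intro g
  set ia : Fin m := ⟨a, ha⟩ with hia
  have hΛ0 : (0:ℝ) < Λ := lt_trans one_pos hΛ
  have hΛi : (0:ℝ) < Λ⁻¹ := inv_pos.mpr hΛ0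
  have hΛi1 : Λ⁻¹ < 1 := by
    rw [inv_lt_one_iff₀]; right; exact hΛ
  set N : ℕ → ℝ := fun b => ∑ i : Fin m, (if (i : ℕ) < b then Λ else Λ⁻¹) * w i * Y i with hNdef
  set D : ℕ → ℝ := fun b => ∑ i : Fin m, (if (i : ℕ) < b then Λ else Λ⁻¹) * w i with hDdef
  have hgb : ∀ b, g b = N b / D b := fun b => rfl
  set c : ℝ := (Λ - Λ⁻¹) * w ia with hcdef
  have hc : 0 < c := mul_pos (by linarith) (hw ia)
  have hDpos : ∀ b, 0 < D b := by
    intro b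
    apply Finset.sum_pos _ ⟨ia, mem_univ ia⟩
    intro i _
    by_cases h : (i : ℕ) < b
    · simp only [h, if_true]; exact mul_pos hΛ0 (hw i)
    · simp only [h, if_false]; exact mul_pos hΛi (hw i)
  have hNstep : N (a + 1) = N a + c * Y ia := by
    have key : ∀ i : Fin m,
        (if (i : ℕ) < a + 1 then Λ else Λ⁻¹) * w i * Y i
          = (if (i : ℕ) < a then Λ else Λ⁻¹) * w i * Y i
            + (if i = ia then (Λ - Λ⁻¹) * w i * Y i else 0) := by
      intro i
      rcases lt_trichotomy (i : ℕ) a with h | h | h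
      · have h1 : (i : ℕ) < a + 1 := by omega
        have h2 : i ≠ ia := by
          intro he; rw [he] at h; simp [hia] at h
        simp [h, h1, h2]
      · have h1 : (i : ℕ) < a + 1 := by omega
        have h2 : i = ia := by
          apply Fin.ext; simp [hia, h]
        simp [h, h1, h2, hia]
        ring
      · have h1 : ¬ (i : ℕ) < a + 1 := by omega
        have h2 : i ≠ ia := by
          intro he; rw [he] at h; simp [hia] at h
        simp [h1, not_lt.mpr (le_of_lt h), h2]
    simp only [hNdef]
    rw [Finset.sum_congr rfl (fun i _ => key i), Finset.sum_add_distrib,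
      Finset.sum_ite_eq' univ ia (fun i => (Λ - Λ⁻¹) * w i * Y i)]
    simp [hcdef]
  have hDstep : D (a + 1) = D a + c := by
    have key : ∀ i : Fin m,
        (if (i : ℕ) < a + 1 then Λ else Λ⁻¹) * w i
          = (if (i : ℕ) < a then Λ else Λ⁻¹) * w i
            + (if i = ia then (Λ - Λ⁻¹) * w i else 0) := by
      intro i
      rcases lt_trichotomy (i : ℕ) a with h | h | h
      · have h1 : (i : ℕ) < a + 1 := by omega
        have h2 : i ≠ ia := by
          intro he; rw [he] at h; simp [hia] at h
        simp [h, h1, h2]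
      · have h1 : (i : ℕ) < a + 1 := by omega
        have h2 : i = ia := by
          apply Fin.ext; simp [hia, h]
        simp [h, h1, h2, hia]
        ring
      · have h1 : ¬ (i : ℕ) < a + 1 := by omega
        have h2 : i ≠ ia := by
          intro he; rw [he] at h; simp [hia] at h
        simp [h1, not_lt.mpr (le_of_lt h), h2]
    simp only [hDdef]
    rw [Finset.sum_congr rfl (fun i _ => key i), Finset.sum_add_distrib,
      Finset.sum_ite_eq' univ ia (fun i => (Λ - Λ⁻¹) * w i)]
    simp [hcdef]
  have hDa := hDpos a
  have hDa1 := hDpos (a + 1)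
  rw [hgb, hgb, hNstep, hDstep, div_le_div_iff₀ hDa (by rw [hDstep] at hDa1; exact hDa1),
    div_le_iff₀ hDa]
  constructor
  · intro h
    nlinarith [h, hc, hDa]
  · intro h
    nlinarith [h, hc, hDa]
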